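/- Deleting or inserting a block of six equal digits does not change the path from the insertion point onward: if z' is obtained from z by inserting six 0s (or six 1s) starting at index n, then P_{n+6+j}(z') = P_{n+j}(z) and d_{n+6+j}(z') = d_{n+j}(z) for all j ≥ 0. In particular, the path of z is bounded iff the path of z' is bounded. -/

import Mathlib

open Finset

noncomputable def ω : ℂ := Complex.exp (Real.pi * Complex.I / 3)

def dir (d0 : ℤ) (z : ℕ → Fin 2) : ℕ → ℤ
  | 0 => d0
  | n + 1 => dir d0 z n + (if z n = 0 then 1 else -1)

noncomputable def pos (d0 : ℤ) (z : ℕ → Fin 2) : ℕ → ℂ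
  | 0 => 0
  | n + 1 => pos d0 z n + ω ^ dir d0 z (n + 1)

/-- Insert a block of six equal digits `b` starting at position `n`. -/
def insert6 (z : ℕ → Fin 2) (n : ℕ) (b : Fin 2) : ℕ → Fin 2 :=
  fun i => if i < n then z i else if i < n + 6 then b else z (i - 6)

lemma hω3 : ω^3 = -1 := by
  unfold ω
  rw [← Complex.exp_nat_mul]
  rw [show (3:ℕ) * (Real.pi * Complex.I / 3) = Real.pi * Complex.I by push_cast; ring]
  exact Complex.exp_pi_mul_I

lemma hωne : ω ≠ 0 := Complex.exp_ne_zero _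

lemma hω6 : ω^6 = 1 := by
  rw [show (6:ℕ) = 3*2 from rfl, pow_mul, hω3]; norm_num

lemma hper (d : ℤ) : ω ^ (d + 6) = ω ^ d := by
  rw [zpow_add₀ hωne, show (6:ℤ) = ((6:ℕ):ℤ) by norm_num, zpow_natCast, hω6, mul_one]

lemma hper' (d : ℤ) : ω ^ (d - 6) = ω ^ d := by
  rw [← hper (d - 6)]; ring_nf

lemma hE (t : ℤ) : ω^(t+1) = ω^t * ω := zpow_add_one₀ hωne t

lemma hkey1 (d : ℤ) :
    ω^(d+1) + ω^(d+2) + ω^(d+3) + ω^(d+4) + ω^(d+5) + ω^(d+6) = 0 := by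
  rw [show d+2 = (d+1)+1 by ring, show d+3 = (d+1)+1+1 by ring,
      show d+4 = (d+1)+1+1+1 by ring, show d+5 = (d+1)+1+1+1+1 by ring,
      show d+6 = (d+1)+1+1+1+1+1 by ring]
  simp only [hE]
  linear_combination (ω^(d:ℤ) * ω + ω^(d:ℤ) * ω^2 + ω^(d:ℤ) * ω^3) * hω3

lemma hkey2 (d : ℤ) :
    ω^(d-1) + ω^(d-2) + ω^(d-3) + ω^(d-4) + ω^(d-5) + ω^(d-6) = 0 := by
  have := hkey1 (d - 7)
  rw [show d-7+1 = d-6 by ring, show d-7+2 = d-5 by ring, show d-7+3 = d-4 by ring,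
      show d-7+4 = d-3 by ring, show d-7+5 = d-2 by ring, show d-7+6 = d-1 by ring] at this
  linear_combination this

lemma hkey (d e : ℤ) (he : e = 1 ∨ e = -1) :
    ω^(d+e) + ω^(d+2*e) + ω^(d+3*e) + ω^(d+4*e) + ω^(d+5*e) + ω^(d+6*e) = 0 := by
  rcases he with rfl | rfl
  · simpa using hkey1 d
  · have := hkey2 d
    rw [show d-1 = d + 1*(-1) by ring, show d-2 = d+2*(-1) by ring,
        show d-3 = d+3*(-1) by ring, show d-4 = d+4*(-1) by ring,
        show d-5 = d+5*(-1) by ring, show d-6 = d+6*(-1) by ring] at this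
    simpa using this

lemma hshift (d e : ℤ) (he : e = 1 ∨ e = -1) : ω ^ (d + 6*e) = ω ^ d := by
  rcases he with rfl | rfl
  · simpa using hper d
  · rw [show d + 6*(-1) = d - 6 by ring]; exact hper' d

theorem insert_six_preserves_path (d0 : ℤ) (z : ℕ → Fin 2) (n : ℕ) (b : Fin 2)
    (z' : ℕ → Fin 2) (hz' : z' = insert6 z n b) :
    (∀ j, pos d0 z' (n + 6 + j) = pos d0 z (n + j)) ∧
    (∀ j, dir d0 z' (n + 6 + j) ≡ dir d0 z (n + j) [ZMOD 6]) ∧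
    ((∃ M : ℝ, ∀ k, ‖pos d0 z k‖ ≤ M) ↔
      (∃ M : ℝ, ∀ k, ‖pos d0 z' k‖ ≤ M)) := by
  set e : ℤ := if b = 0 then 1 else -1 with he_def
  have he : e = 1 ∨ e = -1 := by unfold e; split <;> simp
  have hz'lt : ∀ i, i < n → z' i = z i := by
    intro i h; rw [hz']; unfold insert6; rw [if_pos h]
  have hz'mid : ∀ i, n ≤ i → i < n + 6 → z' i = b := by
    intro i h1 h2; rw [hz']; unfold insert6; rw [if_neg (by omega), if_pos h2]
  have hz'ge : ∀ i, n + 6 ≤ i → z' i = z (i - 6) := by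
    intro i h; rw [hz']; unfold insert6; rw [if_neg (by omega), if_neg (by omega)]
  -- prefix equality
  have hdirpre : ∀ k, k ≤ n → dir d0 z' k = dir d0 z k := by
    intro k hk
    induction k with
    | zero => rfl
    | succ k ih =>
      show dir d0 z' k + _ = dir d0 z k + _
      rw [ih (by omega), hz'lt k (by omega)]
  have hpospre : ∀ k, k ≤ n → pos d0 z' k = pos d0 z k := by
    intro k hk
    induction k with
    | zero => rfl
    | succ k ih =>
      show pos d0 z' k + ω ^ dir d0 z' (k+1) = pos d0 z k + ω ^ dir d0 z (k+1)
      rw [ih (by omega), hdirpre (k+1) (by omega)]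
  -- middle block
  have hdirmid : ∀ j, j ≤ 6 → dir d0 z' (n + j) = dir d0 z n + j * e := by
    intro j hj
    induction j with
    | zero => simpa using hdirpre n le_rfl
    | succ j ih =>
      show dir d0 z' (n + j) + _ = _
      simp only [Nat.add_eq]
      rw [ih (by omega)]
      simp only [hz'mid (n + j) (by omega) (by omega)]
      unfold e
      split <;> push_cast <;> ring
  have hdir : ∀ j, dir d0 z' (n + 6 + j) = dir d0 z (n + j) + 6 * e := by
    intro j
    induction j with
    | zero => simpa using hdirmid 6 le_rfl
    | succ j ih =>
      have h1 : n + 6 + (j + 1) = (n + 6 + j) + 1 := by ring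
      have h2 : n + (j + 1) = (n + j) + 1 := by ring
      rw [h1, h2]
      show dir d0 z' (n + 6 + j) + _ = dir d0 z (n + j) + _ + 6 * e
      rw [ih]
      simp only [hz'ge (n + 6 + j) (by omega), show n + 6 + j - 6 = n + j by omega]
      ring
  have hpos : ∀ j, pos d0 z' (n + 6 + j) = pos d0 z (n + j) := by
    have hpos6 : pos d0 z' (n + 6) = pos d0 z n := by
      have h6 : pos d0 z' (n + 6) = pos d0 z' n +
          (ω ^ dir d0 z' (n+1) + ω ^ dir d0 z' (n+2) + ω ^ dir d0 z' (n+3) +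
           ω ^ dir d0 z' (n+4) + ω ^ dir d0 z' (n+5) + ω ^ dir d0 z' (n+6)) := by
        show pos d0 z' (n+5) + _ = _
        show pos d0 z' (n+4) + _ + _ = _
        show pos d0 z' (n+3) + _ + _ + _ = _
        show pos d0 z' (n+2) + _ + _ + _ + _ = _
        show pos d0 z' (n+1) + _ + _ + _ + _ + _ = _
        show pos d0 z' n + _ + _ + _ + _ + _ + _ = _
        ring
      rw [h6, hpospre n le_rfl,
          hdirmid 1 (by omega), hdirmid 2 (by omega), hdirmid 3 (by omega),
          hdirmid 4 (by omega), hdirmid 5 (by omega), hdirmid 6 (by omega)]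
      push_cast
      rw [show dir d0 z n + 1 * e = dir d0 z n + e by ring]
      rw [hkey (dir d0 z n) e he, add_zero]
    intro j
    induction j with
    | zero => simpa using hpos6
    | succ j ih =>
      have h1 : n + 6 + (j + 1) = (n + 6 + j) + 1 := by ring
      have h2 : n + (j + 1) = (n + j) + 1 := by ring
      rw [h1, h2]
      show pos d0 z' (n + 6 + j) + ω ^ dir d0 z' (n + 6 + j + 1) =
           pos d0 z (n + j) + ω ^ dir d0 z (n + j + 1)
      rw [ih, show n + 6 + j + 1 = n + 6 + (j + 1) by ring, hdir (j+1),
          show n + (j+1) = n + j + 1 by ring, hshift _ e he]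
  refine ⟨hpos, ?_, ?_⟩
  · intro j
    rw [hdir j]
    unfold Int.ModEq
    omega
  · constructor
    · rintro ⟨M, hM⟩
      have hne : (Finset.range (n + 6)).Nonempty := ⟨0, by simp⟩
      refine ⟨max M ((Finset.range (n + 6)).sup' hne fun k => ‖pos d0 z' k‖), ?_⟩
      intro k
      by_cases hk : k < n + 6
      · exact le_trans (Finset.le_sup' (f := fun k => ‖pos d0 z' k‖)
          (Finset.mem_range.mpr hk)) (le_max_right _ _)
      · have : pos d0 z' k = pos d0 z (n + (k - (n + 6))) := by
          rw [← hpos (k - (n + 6)), show n + 6 + (k - (n + 6)) = k by omega]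
        rw [this]
        exact le_trans (hM _) (le_max_left _ _)
    · rintro ⟨M, hM⟩
      refine ⟨M, fun k => ?_⟩
      by_cases hk : k ≤ n
      · rw [← hpospre k hk]; exact hM k
      · have : pos d0 z k = pos d0 z' (k + 6) := by
          have := hpos (k - n)
          rw [show n + (k - n) = k by omega, show n + 6 + (k - n) = k + 6 by omega] at this
          exact this.symm
        rw [this]; exact hM _
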